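/- Let ABC be a triangle and λ, μ, ν positive reals with λ ≥ μ + ν. Then for every point Y in the plane, λ·AY + μ·BY + ν·CY ≥ λ·0 + μ·AB + ν·AC = μ·AB + ν·AC, i.e. the function F(Y) = λ·AY + μ·BY + ν·CY attains its minimum at Y = A, with equality only at Y = A. -/
import Mathlib

theorem stmt_10 (a b c : EuclideanSpace ℝ (Fin 2)) (l m n : ℝ)
    (hl : 0 < l) (hm : 0 < m) (hn : 0 < n) (h : m + n ≤ l)
    (y : EuclideanSpace ℝ (Fin 2)) :
    l * dist a y + m * dist b y + n * dist c y ≥ m * dist a b + n * dist a c := by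
  have h1 : dist a b ≤ dist a y + dist y b := dist_triangle a y b
  have h2 : dist a c ≤ dist a y + dist y c := dist_triangle a y c
  have h3 : dist y b = dist b y := dist_comm y b
  have h4 : dist y c = dist c y := dist_comm y c
  have h5 : 0 ≤ dist a y := dist_nonneg
  nlinarith
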